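/- Let d, k ≥ 1, write ω^j for exp(2πi·j/d), and set X = (Fin k → ZMod d). Let α : X → ℂ and define ψ : X × X → ℂ by ψ(s, t) = α t if s = t and 0 otherwise. For b ∈ X define L_b ψ : X → ℂ by (L_b ψ)(t) = (∏_{i ∈ Fin k} ω^{-((b i).val · (t i).val)}) · Σ_{s ∈ X} (∏_{i ∈ Fin k} (1/√d) · ω^{(b i).val · (s i).val}) · ψ(s, t). Then: (1) for every b ∈ X, L_b ψ = d^{-k/2} · α; and (2) if Σ_{x ∈ X} |α x|² = 1 then for every b ∈ X, Σ_{t ∈ X} |Σ_{s ∈ X} (∏_i (1/√d) · ω^{(b i).val · (s i).val}) · ψ(s, t)|² = d^{-k}, i.e. each outcome vector b occurs with probability exactly d^{-k}. -/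

import Mathlib

/-- Part 3 of the protocol: from the state `ψ = Σ_x α_x |x⟩_S |x⟩_T`, measuring each of
the `k` source registers in the Fourier basis with outcome `b i` and applying the local
phase corrections `|x⟩ ↦ ω^{-(b i)·x}|x⟩` at the targets gives `L_b ψ = d^{-k/2}·α` for
every `b`; moreover if `α` is a unit vector then each outcome `b` occurs with probability
exactly `d^{-k}`. -/
theorem source_measurement_correction (d k : ℕ) [NeZero d] (hk : 1 ≤ k)
    (ω : ℂ) (hω : ω = Complex.exp (2 * (Real.pi : ℂ) * Complex.I / (d : ℂ)))
    (α : (Fin k → ZMod d) → ℂ)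
    (ψ : (Fin k → ZMod d) × (Fin k → ZMod d) → ℂ)
    (hψ : ∀ s t : Fin k → ZMod d, ψ (s, t) = if s = t then α t else 0)
    (L : (Fin k → ZMod d) → ((Fin k → ZMod d) → ℂ))
    (hL : ∀ b t : Fin k → ZMod d,
      L b t = (∏ i : Fin k, ω ^ (-(((b i).val * (t i).val : ℕ) : ℤ))) *
        ∑ s : Fin k → ZMod d,
          (∏ i : Fin k, (1 / (Real.sqrt d : ℂ)) * ω ^ ((b i).val * (s i).val)) * ψ (s, t)) :
    (∀ b : Fin k → ZMod d,
      L b = fun t => (((d : ℝ) ^ (-(k : ℝ) / 2) : ℝ) : ℂ) * α t) ∧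
    ((∑ x : Fin k → ZMod d, ‖α x‖ ^ 2 = 1) →
      ∀ b : Fin k → ZMod d,
        ∑ t : Fin k → ZMod d,
          ‖∑ s : Fin k → ZMod d,
            (∏ i : Fin k, (1 / (Real.sqrt d : ℂ)) * ω ^ ((b i).val * (s i).val)) * ψ (s, t)‖ ^ 2 =
          (d : ℝ) ^ (-(k : ℤ))) := by
  have hd : (0:ℝ) < d := Nat.cast_pos.mpr (Nat.pos_of_ne_zero (NeZero.ne d))
  have hω0 : ω ≠ 0 := by rw [hω]; exact Complex.exp_ne_zero _
  have hωabs : ‖ω‖ = 1 := by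
    have : ω = Complex.exp (((2 * Real.pi / d : ℝ) : ℂ) * Complex.I) := by
      rw [hω]; push_cast; ring
    rw [this, Complex.norm_exp_ofReal_mul_I]
  have hsum : ∀ b t : Fin k → ZMod d,
      (∑ s : Fin k → ZMod d,
        (∏ i : Fin k, (1 / (Real.sqrt d : ℂ)) * ω ^ ((b i).val * (s i).val)) * ψ (s, t))
      = (∏ i : Fin k, (1 / (Real.sqrt d : ℂ)) * ω ^ ((b i).val * (t i).val)) * α t := by
    intro b t
    rw [Finset.sum_eq_single t]
    · rw [hψ]; simp
    · intro s _ hst; rw [hψ]; simp [hst]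
    · simp
  have hr : ((d:ℝ) ^ (-(k:ℝ)/2)) = (1 / Real.sqrt d) ^ k := by
    rw [div_pow, one_pow, neg_div, Real.rpow_neg hd.le, Real.sqrt_eq_rpow,
      ← Real.rpow_natCast ((d:ℝ) ^ (1/2 : ℝ)) k, ← Real.rpow_mul hd.le]
    ring_nf
  constructor
  · intro b
    funext t
    rw [hL, hsum, ← mul_assoc, ← Finset.prod_mul_distrib]
    have hfac : ∀ i : Fin k,
        ω ^ (-(((b i).val * (t i).val : ℕ) : ℤ)) *
          ((1 / (Real.sqrt d : ℂ)) * ω ^ ((b i).val * (t i).val))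
        = (1 / (Real.sqrt d : ℂ)) := by
      intro i
      rw [zpow_neg, zpow_natCast]
      field_simp
    rw [Finset.prod_congr rfl (fun i _ => hfac i), Finset.prod_const, Finset.card_univ,
      Fintype.card_fin]
    congr 1
    rw [hr]
    push_cast
    ring
  · intro h1 b
    have habs : ∀ t : Fin k → ZMod d,
        ‖∏ i : Fin k, (1 / (Real.sqrt d : ℂ)) * ω ^ ((b i).val * (t i).val)‖
        = (1 / Real.sqrt d) ^ k := by
      intro t
      rw [norm_prod]
      have : ∀ i : Fin k,
          ‖(1 / (Real.sqrt d : ℂ)) * ω ^ ((b i).val * (t i).val)‖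
          = 1 / Real.sqrt d := by
        intro i
        rw [norm_mul, norm_pow, hωabs, one_pow, mul_one, norm_div, norm_one,
          Complex.norm_real, Real.norm_eq_abs, abs_of_nonneg (Real.sqrt_nonneg _)]
      rw [Finset.prod_congr rfl (fun i _ => this i), Finset.prod_const, Finset.card_univ,
        Fintype.card_fin]
    have hsq : ((1 / Real.sqrt d) ^ k) ^ 2 = ((d:ℝ) ^ k)⁻¹ := by
      rw [← pow_mul, mul_comm k 2, pow_mul, div_pow, one_pow, Real.sq_sqrt hd.le,
        one_div, inv_pow]
    calc ∑ t : Fin k → ZMod d,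
          ‖∑ s : Fin k → ZMod d,
            (∏ i : Fin k, (1 / (Real.sqrt d : ℂ)) * ω ^ ((b i).val * (s i).val)) * ψ (s, t)‖ ^ 2
        = ∑ t : Fin k → ZMod d, ((d:ℝ) ^ k)⁻¹ * ‖α t‖ ^ 2 := by
          refine Finset.sum_congr rfl fun t _ => ?_
          rw [hsum, norm_mul, habs, mul_pow, hsq]
      _ = (d:ℝ) ^ (-(k:ℤ)) := by
          rw [← Finset.mul_sum, h1, mul_one, zpow_neg, zpow_natCast]
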